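/- Consider N coupled systems ẋᵢ = f(xᵢ) + gᵢ(xᵢ) − c Σⱼ a_ij Γ(xᵢ − xⱼ), where f is QUAD(P,W) with P positive definite diagonal, W diagonal, Γ = diag(γ₁,…,γₙ) with γᵢ > 0 for i ≤ l and γᵢ = 0 for i > l, each ‖gᵢ‖ ≤ M, the first l̄ ≤ l diagonal entries of W may be nonnegative but w_i < 0 for i > l, and the graph with weights a_ij is connected with Laplacian L. Let eᵢ = xᵢ − (1/N)Σⱼ xⱼ and e the stack vector. Then along solutions, V(e) = ½ eᵀ(I_N ⊗ P)e satisfies V̇ ≤ −m(c,P,W)‖e‖₂² + √N ‖P‖₂ M ‖e‖₂, where m(c,P,W) = −max{λ_max(W_l) − c λ₂(L ⊗ P_l Γ_l), λ_max(W_{n−l})}, with W_l, P_l, Γ_l the upper-left l×l blocks and W_{n−l} the lower-right block. -/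

import Mathlib

open Matrix Finset Kronecker


lemma spectral_bound {ι : Type*} [Fintype ι] [DecidableEq ι]
    (B : Matrix ι ι ℝ) (hB : B.IsHermitian) (lam : ℝ)
    (hlow : ∀ μ : ℝ, μ ≠ 0 → (∃ v : ι → ℝ, v ≠ 0 ∧ B *ᵥ v = μ • v) → lam ≤ μ)
    (z : ι → ℝ) (hker : ∀ v : ι → ℝ, B *ᵥ v = 0 → ∑ i, v i * z i = 0) :
    lam * ∑ i, z i ^ 2 ≤ ∑ i, z i * (B *ᵥ z) i := by
  classical
  set b := hB.eigenvectorBasis with hb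
  set μ := hB.eigenvalues with hμ
  have hBsym : ∀ i j, B i j = B j i := by
    intro i j; conv_lhs => rw [← hB]
    simp [Matrix.conjTranspose_apply]
  set Z : EuclideanSpace ℝ ι := (WithLp.equiv 2 (ι → ℝ)).symm z with hZ
  have hinner : ∀ u v : EuclideanSpace ℝ ι, (inner ℝ u v : ℝ) = ∑ j, u j * v j := by
    intro u v
    simp [PiLp.inner_apply, RCLike.inner_apply, starRingEnd_apply, star_trivial]
    exact Finset.sum_congr rfl fun j _ => mul_comm _ _
  set cf : ι → ℝ := fun i => ∑ j, b i j * z j with hcf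
  have hc1 : ∀ i, (inner ℝ (b i) Z : ℝ) = cf i := by intro i; rw [hinner]; rfl
  have hc2 : ∀ i, (inner ℝ Z (b i) : ℝ) = cf i := by
    intro i; rw [real_inner_comm]; exact hc1 i
  -- eigen equation as functions
  have heig : ∀ i, B *ᵥ (fun j => b i j) = fun j => μ i * b i j := by
    intro i
    have := hB.mulVec_eigenvectorBasis i
    convert this using 2 <;> simp [hμ, hb]
  -- Parseval
  have hzz : ∑ j, z j ^ 2 = ∑ i, cf i ^ 2 := by
    have := b.sum_inner_mul_inner Z Z
    have h2 : (inner ℝ Z Z : ℝ) = ∑ j, z j ^ 2 := by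
      rw [hinner]; exact Finset.sum_congr rfl fun j _ => (sq (z j)).symm ▸ rfl
    rw [← h2, ← this]
    exact Finset.sum_congr rfl fun i _ => by rw [hc1, hc2, sq]
  -- quadratic form
  have hq : ∑ j, z j * (B *ᵥ z) j = ∑ i, μ i * cf i ^ 2 := by
    set Bz : EuclideanSpace ℝ ι := (WithLp.equiv 2 (ι → ℝ)).symm (B *ᵥ z) with hBz
    have h1 : ∑ j, z j * (B *ᵥ z) j = (inner ℝ Z Bz : ℝ) := by rw [hinner]; rfl
    rw [h1, ← b.sum_inner_mul_inner Z Bz]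
    refine Finset.sum_congr rfl fun i _ => ?_
    have h3 : (inner ℝ (b i) Bz : ℝ) = μ i * cf i := by
      rw [hinner]
      have : ∑ j, (b i) j * (B *ᵥ z) j = ∑ j, (B *ᵥ (fun j => b i j)) j * z j := by
        simp only [Matrix.mulVec, dotProduct]
        calc ∑ j, b i j * ∑ k, B j k * z k
            = ∑ j, ∑ k, b i j * (B j k * z k) := by
              exact Finset.sum_congr rfl fun j _ => by rw [Finset.mul_sum]
          _ = ∑ k, ∑ j, b i j * (B j k * z k) := Finset.sum_comm
          _ = ∑ k, (∑ j, B k j * b i j) * z k := by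
              refine Finset.sum_congr rfl fun k _ => ?_
              rw [Finset.sum_mul]
              refine Finset.sum_congr rfl fun j _ => ?_
              rw [hBsym j k]; ring
      rw [show ∑ j, (b i) j * Bz j = ∑ j, (b i) j * (B *ᵥ z) j from rfl, this, heig i]
      rw [hcf]; simp only [Finset.mul_sum]
      exact Finset.sum_congr rfl fun j _ => by ring
    rw [h3, hc2]; ring
  rw [hzz, hq, Finset.mul_sum]
  refine Finset.sum_le_sum fun i _ => ?_
  by_cases h0 : μ i = 0
  · have hbz : B *ᵥ (fun j => b i j) = 0 := by rw [heig i, h0]; funext j; simp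
    have : cf i = 0 := by
      have := hker _ hbz
      rw [hcf]; rw [← this]
    rw [this, h0]; simp
  · have hle : lam ≤ μ i := by
      refine hlow _ h0 ⟨fun j => b i j, ?_, ?_⟩
      · intro hzero
        have hnorm := b.orthonormal.1 i
        have : (b i : EuclideanSpace ℝ ι) = 0 := by
          ext j; exact congrFun hzero j
        rw [this] at hnorm; simp at hnorm
      · rw [heig i]; funext j; simp [smul_eq_mul]
    nlinarith [sq_nonneg (cf i)]

lemma walk_const {V : Type*} (G : SimpleGraph V) (v : V → ℝ)
    (h : ∀ i j, G.Adj i j → v i = v j) {i j : V} (w : G.Walk i j) : v i = v j := by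
  induction w with
  | nil => rfl
  | cons h' p ih => exact (h _ _ h').trans ih

section lap
variable {N : ℕ} (a : Fin N → Fin N → ℝ) (L : Matrix (Fin N) (Fin N) ℝ)

lemma lap_mulVec (hL : ∀ i j, L i j = if i = j then ∑ k ∈ univ.erase i, a i k else -a i j) (v : Fin N → ℝ) (i : Fin N) :
    (L *ᵥ v) i = ∑ j, a i j * (v i - v j) := by
  simp only [Matrix.mulVec, dotProduct]
  rw [← Finset.sum_erase_add _ _ (Finset.mem_univ i),
      ← Finset.sum_erase_add _ (fun j => a i j * (v i - v j)) (Finset.mem_univ i)]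
  have h1 : L i i * v i = ∑ k ∈ univ.erase i, a i k * v i := by
    rw [hL i i, if_pos rfl, Finset.sum_mul]
  rw [h1, sub_self, mul_zero, add_zero, ← Finset.sum_add_distrib]
  refine Finset.sum_congr rfl fun j hj => ?_
  rw [hL i j, if_neg (Ne.symm (Finset.mem_erase.mp hj).1)]
  ring

lemma lap_quad (hL : ∀ i j, L i j = if i = j then ∑ k ∈ univ.erase i, a i k else -a i j) (hsym : ∀ i j, a i j = a j i) (v : Fin N → ℝ) :
    ∑ i, v i * (L *ᵥ v) i = (1/2) * ∑ i, ∑ j, a i j * (v i - v j)^2 := by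
  have key : ∀ i, v i * (L *ᵥ v) i = ∑ j, a i j * (v i * (v i - v j)) := by
    intro i
    rw [lap_mulVec a L hL, Finset.mul_sum]
    exact Finset.sum_congr rfl fun j _ => by ring
  simp only [key]
  have h2 : ∑ i, ∑ j, a i j * (v i * (v i - v j))
      = ∑ i, ∑ j, a i j * (v j * (v j - v i)) := by
    rw [Finset.sum_comm]
    exact Finset.sum_congr rfl fun i _ => Finset.sum_congr rfl fun j _ => by
      rw [hsym i j]
  have h3 : ∑ i, ∑ j, a i j * (v i - v j)^2
      = ∑ i, ∑ j, (a i j * (v i * (v i - v j)) + a i j * (v j * (v j - v i))) := by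
    refine Finset.sum_congr rfl fun i _ => Finset.sum_congr rfl fun j _ => by ring
  rw [h3]
  simp only [Finset.sum_add_distrib]
  rw [← h2]
  ring

lemma lap_quad_nonneg (hL : ∀ i j, L i j = if i = j then ∑ k ∈ univ.erase i, a i k else -a i j) (hsym : ∀ i j, a i j = a j i) (hnonneg : ∀ i j, 0 ≤ a i j)
    (v : Fin N → ℝ) : 0 ≤ ∑ i, v i * (L *ᵥ v) i := by
  rw [lap_quad a L hL hsym]
  have : (0:ℝ) ≤ ∑ i, ∑ j, a i j * (v i - v j)^2 :=
    Finset.sum_nonneg fun i _ => Finset.sum_nonneg fun j _ =>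
      mul_nonneg (hnonneg i j) (sq_nonneg _)
  linarith

lemma lap_kernel_const (hL : ∀ i j, L i j = if i = j then ∑ k ∈ univ.erase i, a i k else -a i j) (hsym : ∀ i j, a i j = a j i) (hnonneg : ∀ i j, 0 ≤ a i j)
    (G : SimpleGraph (Fin N)) (hadj : ∀ i j, G.Adj i j ↔ i ≠ j ∧ 0 < a i j)
    (hconn : G.Connected) (v : Fin N → ℝ)
    (hq : ∑ i, v i * (L *ᵥ v) i = 0) : ∀ i j, v i = v j := by
  have hz : ∀ i j, a i j * (v i - v j)^2 = 0 := by
    rw [lap_quad a L hL hsym] at hq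
    have hqq : ∑ i, ∑ j, a i j * (v i - v j)^2 = 0 := by linarith
    intro i j
    have h1 : ∀ i : Fin N, (0:ℝ) ≤ ∑ j, a i j * (v i - v j)^2 :=
      fun i => Finset.sum_nonneg fun j _ => mul_nonneg (hnonneg i j) (sq_nonneg _)
    have h2 : ∑ j, a i j * (v i - v j)^2 = 0 :=
      (Finset.sum_eq_zero_iff_of_nonneg (fun i _ => h1 i)).mp hqq i (Finset.mem_univ i)
    exact (Finset.sum_eq_zero_iff_of_nonneg
      (fun j _ => mul_nonneg (hnonneg i j) (sq_nonneg _))).mp h2 j (Finset.mem_univ j)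
  have hadjeq : ∀ i j, G.Adj i j → v i = v j := by
    intro i j hij
    rcases (hadj i j).mp hij with ⟨-, hpos⟩
    have := hz i j
    have h2 : (v i - v j)^2 = 0 := by
      rcases mul_eq_zero.mp this with h | h
      · exact absurd h (ne_of_gt hpos)
      · exact h
    have := pow_eq_zero_iff (n := 2) (by norm_num) |>.mp h2
    linarith
  intro i j
  exact walk_const G v hadjeq ((hconn i j).some)

end lap

lemma kron_mulVec {N l : ℕ} (L : Matrix (Fin N) (Fin N) ℝ) (d : Fin l → ℝ)
    (v : Fin N × Fin l → ℝ) (i : Fin N) (κ : Fin l) :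
    ((L ⊗ₖ Matrix.diagonal d) *ᵥ v) (i,κ) = d κ * ∑ j, L i j * v (j,κ) := by
  simp only [Matrix.mulVec, dotProduct, Fintype.sum_prod_type,
    Matrix.kroneckerMap_apply, Matrix.diagonal, Matrix.of_apply]
  rw [Finset.mul_sum]
  refine Finset.sum_congr rfl fun j _ => ?_
  rw [Finset.sum_eq_single κ]
  · simp; ring
  · intro b _ hb; simp [Ne.symm hb]
  · intro h; exact absurd (Finset.mem_univ κ) h

lemma kron_isHerm {N l : ℕ} (L : Matrix (Fin N) (Fin N) ℝ) (d : Fin l → ℝ)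
    (hLsym : ∀ i j, L i j = L j i) :
    (L ⊗ₖ Matrix.diagonal d).IsHermitian := by
  unfold Matrix.IsHermitian
  ext ⟨i,κ⟩ ⟨j,κ'⟩
  simp only [Matrix.conjTranspose_apply, Matrix.kroneckerMap_apply, Matrix.diagonal,
    Matrix.of_apply, star_trivial]
  rw [hLsym j i]
  by_cases h : κ = κ'
  · subst h; simp
  · simp [h, Ne.symm h]

lemma cs_sqrt {ι : Type*} (s : Finset ι) (f g : ι → ℝ) :
    ∑ i ∈ s, f i * g i ≤ Real.sqrt (∑ i ∈ s, f i ^ 2) * Real.sqrt (∑ i ∈ s, g i ^ 2) := by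
  calc ∑ i ∈ s, f i * g i ≤ |∑ i ∈ s, f i * g i| := le_abs_self _
    _ = Real.sqrt ((∑ i ∈ s, f i * g i)^2) := (Real.sqrt_sq_eq_abs _).symm
    _ ≤ Real.sqrt ((∑ i ∈ s, f i ^2) * (∑ i ∈ s, g i ^2)) :=
        Real.sqrt_le_sqrt (Finset.sum_mul_sq_le_sq_mul_sq s f g)
    _ = _ := Real.sqrt_mul (Finset.sum_nonneg fun _ _ => sq_nonneg _) _

lemma reindex_lt {n l : ℕ} (hl : l ≤ n) (F : Fin n → ℝ) :
    ∑ k ∈ univ.filter (fun k : Fin n => (k:ℕ) < l), F k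
      = ∑ κ : Fin l, F (Fin.castLE hl κ) := by
  refine Finset.sum_bij' (fun k hk => (⟨(k:ℕ), (Finset.mem_filter.mp hk).2⟩ : Fin l))
    (fun κ _ => Fin.castLE hl κ) ?_ ?_ ?_ ?_ ?_
  · intro a ha; exact Finset.mem_univ _
  · intro κ _; exact Finset.mem_filter.mpr ⟨Finset.mem_univ _, κ.2⟩
  · intro a ha; rfl
  · intro κ _; rfl
  · intro a ha; rfl


/-- For `N` linearly coupled systems `ẋᵢ = f(xᵢ) + gᵢ(xᵢ) − c Σⱼ a_ij Γ(xᵢ−xⱼ)`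
with `f` QUAD(P,W), `P` positive diagonal, `Γ = diag γ` with `γ k > 0` for `k < l` and `0`
otherwise, `‖gᵢ‖ ≤ M`, `w k < 0` for `k ≥ l`, and a connected coupling graph with Laplacian
`L`, the Lyapunov function `V(e) = ½ eᵀ(I_N ⊗ P)e` of the error `eᵢ = xᵢ − x̄` satisfies
`V̇ ≤ −m(c,P,W)‖e‖₂² + √N ‖P‖₂ M ‖e‖₂`, where
`m(c,P,W) = −max{λ_max(W_l) − c λ₂(L ⊗ P_l Γ_l), λ_max(W_{n−l})}`. -/
theorem stmt4 (n N l : ℕ) (hN : 1 ≤ N) (hl : l ≤ n)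
    (f : (Fin n → ℝ) → (Fin n → ℝ)) (g : Fin N → (Fin n → ℝ) → (Fin n → ℝ))
    (p w : Fin n → ℝ) (hp : ∀ k, 0 < p k)
    (hQUAD : ∀ x y : Fin n → ℝ,
      ∑ k, p k * (x k - y k) * (f x k - f y k) ≤ ∑ k, w k * (x k - y k) ^ 2)
    (γ : Fin n → ℝ) (hγpos : ∀ k : Fin n, (k : ℕ) < l → 0 < γ k)
    (hγ0 : ∀ k : Fin n, l ≤ (k : ℕ) → γ k = 0)
    (hwneg : ∀ k : Fin n, l ≤ (k : ℕ) → w k < 0)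
    (M : ℝ) (hM : 0 ≤ M)
    (hg : ∀ i x, Real.sqrt (∑ k, (g i x k) ^ 2) ≤ M)
    (a : Fin N → Fin N → ℝ) (hsym : ∀ i j, a i j = a j i) (hnonneg : ∀ i j, 0 ≤ a i j)
    (G : SimpleGraph (Fin N)) (hadj : ∀ i j, G.Adj i j ↔ i ≠ j ∧ 0 < a i j)
    (hconn : G.Connected)
    (L : Matrix (Fin N) (Fin N) ℝ)
    (hL : ∀ i j, L i j = if i = j then ∑ k ∈ univ.erase i, a i k else -a i j)
    (lam₂ : ℝ)
    (hlam₂ : IsLeast {μ : ℝ | μ ≠ 0 ∧ ∃ z : Fin N × Fin l → ℝ, z ≠ 0 ∧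
      (L ⊗ₖ Matrix.diagonal (fun k : Fin l => p (Fin.castLE hl k) * γ (Fin.castLE hl k)))
        *ᵥ z = μ • z} lam₂)
    (wlmax : ℝ)
    (hwlmax : IsGreatest {r : ℝ | ∃ k : Fin n, (k : ℕ) < l ∧ w k = r} wlmax)
    (wnlmax : ℝ)
    (hwnlmax : IsGreatest {r : ℝ | ∃ k : Fin n, l ≤ (k : ℕ) ∧ w k = r} wnlmax)
    (Pnorm : ℝ) (hPnorm : IsGreatest (Set.range p) Pnorm)
    (c : ℝ) (hc : 0 < c)
    (m : ℝ) (hm : m = -max (wlmax - c * lam₂) wnlmax)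
    (x : ℝ → Fin N → Fin n → ℝ)
    (hx : ∀ t : ℝ, ∀ i : Fin N, HasDerivAt (fun s => x s i)
      (fun k => f (x t i) k + g i (x t i) k
        - c * ∑ j, a i j * (γ k * (x t i k - x t j k))) t)
    (E : ℝ → Fin N → Fin n → ℝ)
    (hE : ∀ s i k, E s i k = x s i k - (1 / N : ℝ) * ∑ j, x s j k) :
    ∀ t d : ℝ,
      HasDerivAt (fun s => (1 / 2 : ℝ) * ∑ i, ∑ k, p k * (E s i k) ^ 2) d t →
      d ≤ -m * (∑ i, ∑ k, (E t i k) ^ 2)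
          + Real.sqrt N * Pnorm * M * Real.sqrt (∑ i, ∑ k, (E t i k) ^ 2) := by
  intro t d hd
  have hNpos : (0:ℝ) < (N:ℝ) := by exact_mod_cast Nat.lt_of_lt_of_le Nat.zero_lt_one hN
  have hLsym : ∀ i j, L i j = L j i := by
    intro i j
    rw [hL, hL]
    by_cases h : i = j
    · simp [h]
    · rw [if_neg h, if_neg (Ne.symm h), hsym]
  -- definitions
  set xbar : Fin n → ℝ := fun k => (1/(N:ℝ)) * ∑ j, x t j k with hxbar
  set Xd : Fin N → Fin n → ℝ := fun i k => f (x t i) k + g i (x t i) k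
      - c * ∑ j, a i j * (γ k * (x t i k - x t j k)) with hXd
  set Ed : Fin N → Fin n → ℝ := fun i k => Xd i k - (1/(N:ℝ)) * ∑ j, Xd j k with hEd
  have hEzero : ∀ k, ∑ i, E t i k = 0 := by
    intro k
    have : ∑ i, E t i k = ∑ i : Fin N, (x t i k - (1/(N:ℝ)) * ∑ j, x t j k) :=
      Finset.sum_congr rfl fun i _ => hE t i k
    rw [this, Finset.sum_sub_distrib, Finset.sum_const, Finset.card_univ, Fintype.card_fin,
      nsmul_eq_mul]
    rw [← mul_assoc, mul_one_div_cancel hNpos.ne', one_mul, sub_self]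
  have hEeq : ∀ i k, E t i k = x t i k - xbar k := fun i k => hE t i k
  -- derivative identification
  have hx' : ∀ i k, HasDerivAt (fun s => x s i k) (Xd i k) t := by
    intro i k
    exact (hasDerivAt_pi.mp (hx t i)) k
  have hxbar' : ∀ k, HasDerivAt (fun s => (1/(N:ℝ)) * ∑ j, x s j k)
      ((1/(N:ℝ)) * ∑ j, Xd j k) t := by
    intro k
    exact HasDerivAt.const_mul _ (HasDerivAt.fun_sum fun j _ => hx' j k)
  have hE' : ∀ i k, HasDerivAt (fun s => E s i k) (Ed i k) t := by
    intro i k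
    have h1 := (hx' i k).sub (hxbar' k)
    have heq : (fun s => E s i k) = fun s => x s i k - (1/(N:ℝ)) * ∑ j, x s j k := by
      funext s
      rw [hE s i k]
    rw [heq]
    exact h1
  have hV : HasDerivAt (fun s => (1 / 2 : ℝ) * ∑ i, ∑ k, p k * (E s i k) ^ 2)
      ((1/2:ℝ) * ∑ i, ∑ k, p k * ((2:ℕ) * E t i k ^ 1 * Ed i k)) t := by
    exact HasDerivAt.const_mul _ (HasDerivAt.fun_sum fun i _ =>
      HasDerivAt.fun_sum fun k _ => ((hE' i k).pow 2).const_mul (p k))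
  have hd1 : d = ∑ i, ∑ k, p k * (E t i k * Ed i k) := by
    rw [hd.unique hV, Finset.mul_sum]
    refine Finset.sum_congr rfl fun i _ => ?_
    rw [Finset.mul_sum]
    refine Finset.sum_congr rfl fun k _ => ?_
    push_cast
    ring
  -- decomposition
  set Sf : ℝ := ∑ i, ∑ k, p k * (E t i k * (f (x t i) k - f xbar k)) with hSfdef
  set Sg : ℝ := ∑ i, ∑ k, p k * (E t i k * g i (x t i) k) with hSgdef
  set Sc : ℝ := ∑ i, ∑ k, p k * (E t i k *
      (-c * ∑ j, a i j * (γ k * (E t i k - E t j k)))) with hScdef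
  set Cc : Fin n → ℝ := fun k => p k * (f xbar k - (1/(N:ℝ)) * ∑ j, Xd j k) with hCc
  have hdiffE : ∀ i j k, x t i k - x t j k = E t i k - E t j k := by
    intro i j k
    rw [hE t i k, hE t j k]
    ring
  have key : ∀ i k, p k * (E t i k * Ed i k)
      = p k * (E t i k * (f (x t i) k - f xbar k))
      + p k * (E t i k * g i (x t i) k)
      + p k * (E t i k * (-c * ∑ j, a i j * (γ k * (E t i k - E t j k))))
      + Cc k * E t i k := by
    intro i k
    have h2 : Xd i k = f (x t i) k + g i (x t i) k
        - c * ∑ j, a i j * (γ k * (E t i k - E t j k)) := by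
      rw [hXd]
      simp only
      congr 2
      refine Finset.sum_congr rfl fun j _ => ?_
      rw [hdiffE i j k]
    have h1 : Ed i k = Xd i k - (1/(N:ℝ)) * ∑ j, Xd j k := rfl
    rw [h1, h2, hCc]
    ring
  have hcorr : ∑ i, ∑ k, Cc k * E t i k = 0 := by
    rw [Finset.sum_comm]
    refine Finset.sum_eq_zero fun k _ => ?_
    rw [← Finset.mul_sum, hEzero k, mul_zero]
  have hd2 : d = Sf + Sg + Sc := by
    rw [hd1]
    have : ∑ i, ∑ k, p k * (E t i k * Ed i k)
        = ∑ i, ∑ k, (p k * (E t i k * (f (x t i) k - f xbar k))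
          + p k * (E t i k * g i (x t i) k)
          + p k * (E t i k * (-c * ∑ j, a i j * (γ k * (E t i k - E t j k))))
          + Cc k * E t i k) :=
      Finset.sum_congr rfl fun i _ => Finset.sum_congr rfl fun k _ => key i k
    rw [this]
    simp only [Finset.sum_add_distrib]
    rw [hcorr, add_zero]
  -- QUAD bound
  have hSf : Sf ≤ ∑ i, ∑ k, w k * (E t i k)^2 := by
    refine Finset.sum_le_sum fun i _ => ?_
    have hq := hQUAD (x t i) xbar
    calc ∑ k, p k * (E t i k * (f (x t i) k - f xbar k))
        = ∑ k, p k * (x t i k - xbar k) * (f (x t i) k - f xbar k) :=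
          Finset.sum_congr rfl fun k _ => by rw [← hEeq i k]; ring
      _ ≤ ∑ k, w k * (x t i k - xbar k)^2 := hq
      _ = ∑ k, w k * (E t i k)^2 :=
          Finset.sum_congr rfl fun k _ => by rw [← hEeq i k]
  -- perturbation bound
  have hPpos : 0 < Pnorm := by
    obtain ⟨k₀, hk₀⟩ := hPnorm.1
    rw [← hk₀]
    exact hp k₀
  have hSg : Sg ≤ Real.sqrt N * Pnorm * M * Real.sqrt (∑ i, ∑ k, (E t i k)^2) := by
    have step1 : ∀ i : Fin N, ∑ k, p k * (E t i k * g i (x t i) k)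
        ≤ Pnorm * M * Real.sqrt (∑ k, (E t i k)^2) := by
      intro i
      have h1 : ∑ k, p k * (E t i k * g i (x t i) k)
          = ∑ k, (p k * E t i k) * g i (x t i) k :=
        Finset.sum_congr rfl fun k _ => by ring
      have h2 := cs_sqrt univ (fun k => p k * E t i k) (fun k => g i (x t i) k)
      have h3 : Real.sqrt (∑ k, (p k * E t i k)^2)
          ≤ Pnorm * Real.sqrt (∑ k, (E t i k)^2) := by
        have h4 : ∑ k, (p k * E t i k)^2 ≤ Pnorm^2 * ∑ k, (E t i k)^2 := by
          rw [Finset.mul_sum]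
          refine Finset.sum_le_sum fun k _ => ?_
          have hpk : p k ≤ Pnorm := hPnorm.2 (Set.mem_range_self k)
          calc (p k * E t i k)^2 = p k^2 * (E t i k)^2 := by ring
            _ ≤ Pnorm^2 * (E t i k)^2 :=
                mul_le_mul_of_nonneg_right (pow_le_pow_left₀ (hp k).le hpk 2) (sq_nonneg _)
        calc Real.sqrt (∑ k, (p k * E t i k)^2)
            ≤ Real.sqrt (Pnorm^2 * ∑ k, (E t i k)^2) := Real.sqrt_le_sqrt h4
          _ = Pnorm * Real.sqrt (∑ k, (E t i k)^2) := by
              rw [Real.sqrt_mul (sq_nonneg _), Real.sqrt_sq hPpos.le]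
      calc ∑ k, p k * (E t i k * g i (x t i) k)
          ≤ Real.sqrt (∑ k, (p k * E t i k)^2) * Real.sqrt (∑ k, (g i (x t i) k)^2) := by
            rw [h1]; exact h2
        _ ≤ (Pnorm * Real.sqrt (∑ k, (E t i k)^2)) * M := by
            refine mul_le_mul h3 (hg i (x t i)) (Real.sqrt_nonneg _) ?_
            positivity
        _ = Pnorm * M * Real.sqrt (∑ k, (E t i k)^2) := by ring
    have step2 : ∑ i, Real.sqrt (∑ k, (E t i k)^2)
        ≤ Real.sqrt N * Real.sqrt (∑ i, ∑ k, (E t i k)^2) := by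
      have h5 := cs_sqrt univ (fun _ : Fin N => (1:ℝ))
        (fun i => Real.sqrt (∑ k, (E t i k)^2))
      simp only [one_mul, one_pow] at h5
      have h6 : ∑ _i : Fin N, (1:ℝ) = (N:ℝ) := by
        simp [Finset.card_univ]
      have h7 : ∑ i, Real.sqrt (∑ k, (E t i k)^2)^2 = ∑ i, ∑ k, (E t i k)^2 :=
        Finset.sum_congr rfl fun i _ =>
          Real.sq_sqrt (Finset.sum_nonneg fun k _ => sq_nonneg _)
      rw [h6, h7] at h5
      exact h5
    calc Sg ≤ ∑ i, Pnorm * M * Real.sqrt (∑ k, (E t i k)^2) :=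
          Finset.sum_le_sum fun i _ => step1 i
      _ = Pnorm * M * ∑ i, Real.sqrt (∑ k, (E t i k)^2) := by rw [Finset.mul_sum]
      _ ≤ Pnorm * M * (Real.sqrt N * Real.sqrt (∑ i, ∑ k, (E t i k)^2)) := by
          refine mul_le_mul_of_nonneg_left step2 ?_
          positivity
      _ = Real.sqrt N * Pnorm * M * Real.sqrt (∑ i, ∑ k, (E t i k)^2) := by ring
  -- coupling bound via spectral theory
  set dvec : Fin l → ℝ := fun κ => p (Fin.castLE hl κ) * γ (Fin.castLE hl κ) with hdvec
  set B := L ⊗ₖ Matrix.diagonal dvec with hBdef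
  set z : Fin N × Fin l → ℝ := fun q => E t q.1 (Fin.castLE hl q.2) with hzdef
  have hdpos : ∀ κ : Fin l, 0 < dvec κ := by
    intro κ
    exact mul_pos (hp _) (hγpos _ (by simpa using κ.2))
  have hherm : B.IsHermitian := kron_isHerm L dvec hLsym
  have hker : ∀ v : Fin N × Fin l → ℝ, B *ᵥ v = 0 → ∑ q, v q * z q = 0 := by
    intro v hv
    have hLk : ∀ κ : Fin l, ∑ i, (fun i => v (i,κ)) i * ((L *ᵥ fun i => v (i,κ)) i) = 0 := by
      intro κ
      refine Finset.sum_eq_zero fun i _ => ?_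
      have h1 := congrFun hv (i,κ)
      rw [hBdef, kron_mulVec] at h1
      have h2 : ∑ j, L i j * v (j,κ) = 0 := by
        have := (hdpos κ).ne'
        simp only [Pi.zero_apply] at h1
        rcases mul_eq_zero.mp h1 with h | h
        · exact absurd h this
        · exact h
      have h3 : (L *ᵥ fun i => v (i,κ)) i = 0 := h2
      rw [h3, mul_zero]
    have hconst : ∀ κ : Fin l, ∀ i j, v (i,κ) = v (j,κ) := by
      intro κ
      exact lap_kernel_const a L hL hsym hnonneg G hadj hconn _ (hLk κ)
    rw [Fintype.sum_prod_type, Finset.sum_comm]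
    refine Finset.sum_eq_zero fun κ _ => ?_
    have i0 : Fin N := ⟨0, hN⟩
    calc ∑ i, v (i,κ) * z (i,κ) = ∑ i, v (i0,κ) * z (i,κ) :=
          Finset.sum_congr rfl fun i _ => by rw [hconst κ i i0]
      _ = v (i0,κ) * ∑ i, z (i,κ) := by rw [Finset.mul_sum]
      _ = 0 := by
          have : ∑ i, z (i,κ) = 0 := hEzero (Fin.castLE hl κ)
          rw [this, mul_zero]
  have hspec : lam₂ * ∑ q, z q ^ 2 ≤ ∑ q, z q * (B *ᵥ z) q :=
    spectral_bound B hherm lam₂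
      (fun μ h0 hex => hlam₂.2 ⟨h0, hex⟩) z hker
  have hQz : ∑ q, z q * (B *ᵥ z) q
      = ∑ i, ∑ κ : Fin l, dvec κ * (z (i,κ) * ∑ j, a i j * (z (i,κ) - z (j,κ))) := by
    rw [Fintype.sum_prod_type]
    refine Finset.sum_congr rfl fun i _ => Finset.sum_congr rfl fun κ _ => ?_
    rw [hBdef, kron_mulVec]
    have h1 : ∑ j, L i j * z (j,κ) = ∑ j, a i j * (z (i,κ) - z (j,κ)) :=
      lap_mulVec a L hL (fun j => z (j,κ)) i
    rw [h1]
    ring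
  have hSc : Sc = -c * ∑ q, z q * (B *ᵥ z) q := by
    rw [hQz, hScdef, Finset.mul_sum]
    refine Finset.sum_congr rfl fun i _ => ?_
    rw [← Finset.sum_filter_add_sum_filter_not univ (fun k : Fin n => (k:ℕ) < l)]
    have h0 : ∑ k ∈ univ.filter (fun k : Fin n => ¬ (k:ℕ) < l),
        p k * (E t i k * (-c * ∑ j, a i j * (γ k * (E t i k - E t j k)))) = 0 := by
      refine Finset.sum_eq_zero fun k hk => ?_
      have hkl : l ≤ (k:ℕ) := not_lt.mp (Finset.mem_filter.mp hk).2
      rw [hγ0 k hkl]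
      simp
    rw [h0, add_zero, reindex_lt hl, Finset.mul_sum]
    refine Finset.sum_congr rfl fun κ _ => ?_
    have hγs : ∑ j, a i j * (γ (Fin.castLE hl κ) * (E t i (Fin.castLE hl κ) - E t j (Fin.castLE hl κ)))
        = γ (Fin.castLE hl κ) * ∑ j, a i j * (E t i (Fin.castLE hl κ) - E t j (Fin.castLE hl κ)) := by
      rw [Finset.mul_sum]
      exact Finset.sum_congr rfl fun j _ => by ring
    rw [hγs]
    show p (Fin.castLE hl κ) * (E t i (Fin.castLE hl κ) * (-c * (γ (Fin.castLE hl κ) * _))) = _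
    rw [hzdef, hdvec]
    simp only
    ring
  -- energy split
  set El : ℝ := ∑ i, ∑ k ∈ univ.filter (fun k : Fin n => (k:ℕ) < l), (E t i k)^2 with hEldef
  set Eh : ℝ := ∑ i, ∑ k ∈ univ.filter (fun k : Fin n => ¬ (k:ℕ) < l), (E t i k)^2 with hEhdef
  have hSl : ∑ q, z q ^ 2 = El := by
    rw [Fintype.sum_prod_type, hEldef]
    exact Finset.sum_congr rfl fun i _ => (reindex_lt hl (fun k => (E t i k)^2)).symm
  have hStot : ∑ i, ∑ k, (E t i k)^2 = El + Eh := by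
    rw [hEldef, hEhdef, ← Finset.sum_add_distrib]
    exact Finset.sum_congr rfl fun i _ =>
      (Finset.sum_filter_add_sum_filter_not univ _ _).symm
  have hEl0 : 0 ≤ El := Finset.sum_nonneg fun i _ => Finset.sum_nonneg fun k _ => sq_nonneg _
  have hEh0 : 0 ≤ Eh := Finset.sum_nonneg fun i _ => Finset.sum_nonneg fun k _ => sq_nonneg _
  have hScle : Sc ≤ -c * (lam₂ * El) := by
    rw [hSc, ← hSl]
    nlinarith [hspec]
  -- w bound
  have hw : ∑ i, ∑ k, w k * (E t i k)^2 ≤ wlmax * El + wnlmax * Eh := by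
    have hwl : ∀ i : Fin N, ∑ k ∈ univ.filter (fun k : Fin n => (k:ℕ) < l), w k * (E t i k)^2
        ≤ ∑ k ∈ univ.filter (fun k : Fin n => (k:ℕ) < l), wlmax * (E t i k)^2 := by
      intro i
      refine Finset.sum_le_sum fun k hk => ?_
      exact mul_le_mul_of_nonneg_right
        (hwlmax.2 ⟨k, (Finset.mem_filter.mp hk).2, rfl⟩) (sq_nonneg _)
    have hwh : ∀ i : Fin N, ∑ k ∈ univ.filter (fun k : Fin n => ¬ (k:ℕ) < l), w k * (E t i k)^2
        ≤ ∑ k ∈ univ.filter (fun k : Fin n => ¬ (k:ℕ) < l), wnlmax * (E t i k)^2 := by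
      intro i
      refine Finset.sum_le_sum fun k hk => ?_
      exact mul_le_mul_of_nonneg_right
        (hwnlmax.2 ⟨k, not_lt.mp (Finset.mem_filter.mp hk).2, rfl⟩) (sq_nonneg _)
    calc ∑ i, ∑ k, w k * (E t i k)^2
        = ∑ i, (∑ k ∈ univ.filter (fun k : Fin n => (k:ℕ) < l), w k * (E t i k)^2
          + ∑ k ∈ univ.filter (fun k : Fin n => ¬ (k:ℕ) < l), w k * (E t i k)^2) :=
          Finset.sum_congr rfl fun i _ =>
            (Finset.sum_filter_add_sum_filter_not univ _ _).symm
      _ ≤ ∑ i, (∑ k ∈ univ.filter (fun k : Fin n => (k:ℕ) < l), wlmax * (E t i k)^2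
          + ∑ k ∈ univ.filter (fun k : Fin n => ¬ (k:ℕ) < l), wnlmax * (E t i k)^2) :=
          Finset.sum_le_sum fun i _ => add_le_add (hwl i) (hwh i)
      _ = wlmax * El + wnlmax * Eh := by
          rw [hEldef, hEhdef, Finset.mul_sum, Finset.mul_sum, ← Finset.sum_add_distrib]
          exact Finset.sum_congr rfl fun i _ => by
            rw [Finset.mul_sum, Finset.mul_sum]
      _ = wlmax * El + wnlmax * Eh := rfl
  -- final assembly
  have hmax1 : wlmax - c * lam₂ ≤ -m := by
    rw [hm, neg_neg]
    exact le_max_left _ _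
  have hmax2 : wnlmax ≤ -m := by
    rw [hm, neg_neg]
    exact le_max_right _ _
  have hfin : (wlmax - c * lam₂) * El + wnlmax * Eh ≤ -m * (El + Eh) := by
    have h1 : (wlmax - c * lam₂) * El ≤ -m * El := mul_le_mul_of_nonneg_right hmax1 hEl0
    have h2 : wnlmax * Eh ≤ -m * Eh := mul_le_mul_of_nonneg_right hmax2 hEh0
    linarith
  rw [hd2]
  have hexp : (wlmax - c * lam₂) * El + wnlmax * Eh
      = wlmax * El + wnlmax * Eh - c * (lam₂ * El) := by ring
  have h9 : -m * (El + Eh) = -m * (∑ i, ∑ k, (E t i k)^2) := by rw [hStot]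
  linarith [hSf, hSg, hScle, hfin, hw, hexp, h9]
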